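/- Let p ∈ {2,...,n} and μ ∈ Γ_p with μ_1 ≤ ... ≤ μ_n. Then σ_p^{1/p - 1}(μ) σ_{p-1}(μ|n) ≥ 1 / (C(n,p) (σ_p^{1/p-1}(μ) σ_{p-1}(μ))^{p-1}) for some positive constant C(n,p) depending only on n and p. Equivalently, setting F^{jj} = (1/p)σ_p^{1/p-1}(μ)σ_{p-1}(μ|j) and 𝓕 = Σ_j F^{jj}, one has F^{nn} ≥ c(n,p)/𝓕^{p-1}. -/

import Mathlib

/-- The `p`-th elementary symmetric polynomial of `μ : Fin n → ℝ`. -/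
noncomputable def esymm (n p : ℕ) (μ : Fin n → ℝ) : ℝ :=
  ∑ t ∈ Finset.powersetCard p Finset.univ, ∏ i ∈ t, μ i

/-- The `p`-th Gårding cone in `ℝⁿ`. -/
def gardingCone (n p : ℕ) : Set (Fin n → ℝ) :=
  {μ | ∀ q, 1 ≤ q → q ≤ p → 0 < esymm n q μ}

/-- The eigenvalues `F^{jj} = (1/p) σ_p^{1/p-1}(μ) σ_{p-1}(μ|j)` of the linearized
operator of `σ_p^{1/p}`. -/
noncomputable def linF (n p : ℕ) (μ : Fin n → ℝ) (j : Fin n) : ℝ :=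
  (1 / (p : ℝ)) * esymm n p μ ^ ((1 : ℝ) / p - 1) *
    esymm n (p - 1) (Function.update μ j 0)

namespace Stmt19
open Polynomial Finset

lemma esymm_zero (n : ℕ) (μ : Fin n → ℝ) : esymm n 0 μ = 1 := by
  simp [esymm]

/-- the generating polynomial -/
noncomputable def gp (n : ℕ) (μ : Fin n → ℝ) : ℝ[X] := ∏ i, (X + C (μ i))

lemma gp_monic (n : ℕ) (μ : Fin n → ℝ) : (gp n μ).Monic :=
  monic_prod_of_monic _ _ fun i _ => monic_X_add_C (μ i)

lemma gp_natDegree (n : ℕ) (μ : Fin n → ℝ) : (gp n μ).natDegree = n := by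
  rw [gp, natDegree_prod_of_monic]
  · simp
  · exact fun i _ => monic_X_add_C (μ i)

lemma esymm_eq_coeff {n q : ℕ} (hq : q ≤ n) (μ : Fin n → ℝ) :
    esymm n q μ = (gp n μ).coeff (n - q) := by
  rw [gp, Finset.prod_X_add_C_coeff _ _ (by simpa using Nat.sub_le n q)]
  rw [esymm, card_univ, Fintype.card_fin, Nat.sub_sub_self hq]

lemma gp_roots_card (n : ℕ) (μ : Fin n → ℝ) : Multiset.card (gp n μ).roots = n := by
  have h : gp n μ = ((Finset.univ.val.map (fun i => -μ i)).map (fun a => X - C a)).prod := by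
    rw [gp, Finset.prod, Multiset.map_map]
    congr 1
    apply Multiset.map_congr rfl
    intro i _
    simp [sub_neg_eq_add]
  rw [h, Polynomial.roots_multiset_prod_X_sub_C]
  simp

/-- Derivative step: replaces an (n+1)-tuple by an n-tuple preserving normalized esymms. -/
lemma deriv_step (n : ℕ) (ν : Fin (n+1) → ℝ) :
    ∃ ξ : Fin n → ℝ, ∀ q, q ≤ n →
      ((n + 1 - q : ℕ) : ℝ) * esymm (n+1) q ν = (n+1) * esymm n q ξ := by
  set f := gp (n+1) ν with hf
  have hdeg : f.natDegree = n + 1 := gp_natDegree _ _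
  have hcard : Multiset.card f.roots = n + 1 := gp_roots_card _ _
  have hcard' : n ≤ Multiset.card (derivative f).roots := by
    have := Polynomial.card_roots_le_derivative f
    omega
  have hdle : (derivative f).natDegree ≤ n := by
    have := Polynomial.natDegree_derivative_le f
    omega
  have hcle : Multiset.card (derivative f).roots ≤ (derivative f).natDegree :=
    Polynomial.card_roots' _
  have hsplit : (derivative f).Splits := by
    rw [Polynomial.splits_iff_card_roots]
    omega
  have hlead : (derivative f).leadingCoeff = (n + 1 : ℝ) := by
    have hnd : (derivative f).natDegree = n := by omega
    rw [leadingCoeff, hnd]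
    rw [Polynomial.coeff_derivative]
    have : f.coeff (n + 1) = 1 := by
      have := (gp_monic (n+1) ν).leadingCoeff
      rwa [leadingCoeff, hdeg] at this
    rw [this]; push_cast; ring
  have heq := hsplit.eq_prod_roots
  set m : Multiset ℝ := (derivative f).roots.map (fun a => -a) with hm
  have hmcard : Multiset.card m = n := by rw [hm, Multiset.card_map]; omega
  have heq2 : derivative f = C (n+1 : ℝ) * (m.map (fun a => X + C a)).prod := by
    rw [heq, hlead, hm, Multiset.map_map]
    congr 1
    exact congrArg Multiset.prod (Multiset.map_congr rfl (by intro a _; show X - C a = X + C (-a); rw [map_neg, sub_eq_add_neg]))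
  -- convert m to a tuple
  obtain ⟨l, hl⟩ : ∃ l : List ℝ, (l : Multiset ℝ) = m := ⟨m.toList, Multiset.coe_toList m⟩
  have hlen : l.length = n := by
    have := congrArg Multiset.card hl
    simpa using this.trans hmcard
  refine ⟨fun i => l.get (Fin.cast hlen.symm i), ?_⟩
  intro q hq
  have hmap : Finset.univ.val.map (fun i : Fin n => l.get (Fin.cast hlen.symm i)) = m := by
    rw [Fin.univ_val_map, ← hl]
    congr 1
    subst hlen
    simp [List.ofFn_get]
  have hesymm : esymm n q (fun i => l.get (Fin.cast hlen.symm i)) = m.esymm q := by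
    rw [esymm, ← Finset.esymm_map_val, hmap]
  rw [hesymm]
  -- coefficient computation
  have h1 : (derivative f).coeff (n - q) = f.coeff (n - q + 1) * (n - q + 1 : ℕ) := by
    rw [Polynomial.coeff_derivative]; push_cast; ring
  have h2 : f.coeff (n - q + 1) = esymm (n+1) q ν := by
    have : n - q + 1 = (n + 1) - q := by omega
    rw [this, ← esymm_eq_coeff (by omega)]
  have h3 : (derivative f).coeff (n - q) = (n+1 : ℝ) * m.esymm q := by
    rw [heq2, Polynomial.coeff_C_mul]
    congr 1
    have := Multiset.prod_X_add_C_coeff m (k := n - q) (by omega)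
    rw [this, hmcard, Nat.sub_sub_self hq]
  rw [h1, h2] at h3
  rw [← h3]
  have : ((n + 1 - q : ℕ) : ℝ) = ((n - q + 1 : ℕ) : ℝ) := by congr 1; omega
  rw [this]; ring


/-- normalized symmetric functions -/
noncomputable def pq (n q : ℕ) (ν : Fin n → ℝ) : ℝ := esymm n q ν / (n.choose q : ℝ)

lemma choose_identity (n q : ℕ) (hq : q ≤ n) :
    (n + 1 - q) * (n+1).choose q = (n+1) * n.choose q := by
  calc (n + 1 - q) * (n+1).choose q = (n+1).choose q * (n + 1 - q) := mul_comm _ _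
    _ = (n+1).choose (q+1) * (q+1) := (Nat.choose_succ_right_eq (n+1) q).symm
    _ = (n+1) * n.choose q := (Nat.add_one_mul_choose_eq n q).symm

lemma pq_deriv_step (n q : ℕ) (hq : q ≤ n) (ν : Fin (n+1) → ℝ) (ξ : Fin n → ℝ)
    (h : ((n + 1 - q : ℕ) : ℝ) * esymm (n+1) q ν = (n+1) * esymm n q ξ) :
    pq (n+1) q ν = pq n q ξ := by
  have c1 : (0:ℝ) < ((n+1).choose q : ℝ) := by
    exact_mod_cast Nat.choose_pos (by omega)
  have c2 : (0:ℝ) < (n.choose q : ℝ) := by exact_mod_cast Nat.choose_pos hq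
  have c3 : (0:ℝ) < ((n + 1 - q : ℕ) : ℝ) := by
    have : 0 < n + 1 - q := by omega
    exact_mod_cast this
  have key : ((n + 1 - q : ℕ) : ℝ) * ((n+1).choose q : ℝ) = (n+1) * (n.choose q : ℝ) := by
    exact_mod_cast congrArg (Nat.cast : ℕ → ℝ) (choose_identity n q hq)
  rw [pq, pq]
  rw [div_eq_div_iff (by positivity) (by positivity)]
  apply mul_left_cancel₀ (ne_of_gt c3)
  linear_combination (n.choose q : ℝ) * h - esymm n q ξ * key


lemma esymm_self (n : ℕ) (ν : Fin n → ℝ) : esymm n n ν = ∏ i, ν i := by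
  have h : Finset.powersetCard n (univ : Finset (Fin n)) = {univ} := by
    simpa using Finset.powersetCard_self (univ : Finset (Fin n))
  rw [esymm, h, Finset.sum_singleton]

lemma esymm_pred (n : ℕ) (hn : 1 ≤ n) (ν : Fin n → ℝ) :
    esymm n (n-1) ν = ∑ i, ∏ j ∈ univ.erase i, ν j := by
  rw [esymm]
  symm
  apply Finset.sum_bij (fun i _ => univ.erase i)
  · intro i _
    rw [Finset.mem_powersetCard]
    refine ⟨Finset.subset_univ _, ?_⟩
    rw [Finset.card_erase_of_mem (Finset.mem_univ i)]
    simp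
  · intro i _ j _ hij
    by_contra hne
    have : i ∈ univ.erase j := Finset.mem_erase.2 ⟨hne, Finset.mem_univ i⟩
    rw [← hij] at this
    exact (Finset.mem_erase.1 this).1 rfl
  · intro t ht
    rw [Finset.mem_powersetCard] at ht
    have hcard : (univ \ t).card = 1 := by
      rw [Finset.card_sdiff_of_subset ht.1, ht.2, Finset.card_univ, Fintype.card_fin]
      omega
    obtain ⟨i, hi⟩ := Finset.card_eq_one.1 hcard
    refine ⟨i, Finset.mem_univ i, ?_⟩
    apply Finset.eq_of_subset_of_card_le
    · intro x hx
      rcases Finset.mem_erase.1 hx with ⟨hxi, _⟩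
      by_contra hxt
      have : x ∈ univ \ t := Finset.mem_sdiff.2 ⟨Finset.mem_univ x, hxt⟩
      rw [hi] at this
      exact hxi (Finset.mem_singleton.1 this)
    · rw [Finset.card_erase_of_mem (Finset.mem_univ i), ht.2, Finset.card_univ, Fintype.card_fin]
  · intro i _
    rfl

lemma esymm_two_sum {α : Type*} [DecidableEq α] (s : Finset α) (f : α → ℝ) :
    2 * ∑ t ∈ s.powersetCard 2, ∏ i ∈ t, f i = (∑ i ∈ s, f i)^2 - ∑ i ∈ s, f i^2 := by
  induction s using Finset.induction with
  | empty =>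
    rw [Finset.powersetCard_eq_empty.2 (by simp)]
    simp
  | @insert a s ha ih =>
    have hdisj : Disjoint (s.powersetCard 2) ((s.powersetCard 1).image (insert a)) := by
      rw [Finset.disjoint_right]
      intro t htimg hts
      obtain ⟨u, _, rfl⟩ := Finset.mem_image.1 htimg
      exact ha ((Finset.mem_powersetCard.1 hts).1 (Finset.mem_insert_self a u))
    rw [Finset.powersetCard_succ_insert ha, Finset.sum_union hdisj]
    have hinj : ∀ t ∈ s.powersetCard 1, ∀ u ∈ s.powersetCard 1,
        insert a t = insert a u → t = u := by
      intro t ht u hu h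
      have ht' : t ⊆ s := (Finset.mem_powersetCard.1 ht).1
      have hu' : u ⊆ s := (Finset.mem_powersetCard.1 hu).1
      have h2 : t.erase a = u.erase a := by
        rw [← Finset.erase_insert_eq_erase, h, Finset.erase_insert_eq_erase]
      rwa [Finset.erase_eq_of_notMem (fun hc => ha (ht' hc)),
          Finset.erase_eq_of_notMem (fun hc => ha (hu' hc))] at h2
    rw [Finset.sum_image hinj]
    have himg : ∑ t ∈ s.powersetCard 1, ∏ i ∈ insert a t, f i = f a * ∑ i ∈ s, f i := by
      rw [Finset.powersetCard_one, Finset.sum_map, Finset.mul_sum]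
      apply Finset.sum_congr rfl
      intro i hi
      show ∏ j ∈ insert a {i}, f j = f a * f i
      rw [show insert a ({i} : Finset α) = ({a, i} : Finset α) from rfl,
        Finset.prod_pair (fun h => ha (by rw [h]; exact hi))]
    rw [himg, Finset.sum_insert ha, Finset.sum_insert ha]
    linarith [ih]

lemma pair_prod (n : ℕ) (ν : Fin n → ℝ) {t : Finset (Fin n)} (ht : t.card = 2) :
    ∏ i ∈ t, (∏ j ∈ univ.erase i, ν j) = (∏ j ∈ univ \ t, ν j) * ∏ j, ν j := by
  obtain ⟨i, j, hij, rfl⟩ := Finset.card_eq_two.1 ht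
  rw [Finset.prod_pair hij]
  have hins : ∀ a b : Fin n, a ≠ b → univ.erase a = insert b (univ \ {a, b}) := by
    intro a b hab
    ext x
    constructor
    · intro hx
      have hxa : x ≠ a := (Finset.mem_erase.1 hx).1
      by_cases hxb : x = b
      · exact Finset.mem_insert.2 (Or.inl hxb)
      · exact Finset.mem_insert.2 (Or.inr (Finset.mem_sdiff.2
          ⟨Finset.mem_univ x, by simp [hxa, hxb]⟩))
    · intro hx
      rcases Finset.mem_insert.1 hx with rfl | hx
      · exact Finset.mem_erase.2 ⟨hab.symm, Finset.mem_univ x⟩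
      · have h4 := (Finset.mem_sdiff.1 hx).2
        refine Finset.mem_erase.2 ⟨?_, Finset.mem_univ x⟩
        simp only [Finset.mem_insert, Finset.mem_singleton] at h4
        tauto
  have huniv : ν i * (ν j * ∏ k ∈ univ \ {i, j}, ν k) = ∏ k, ν k := by
    have heq : (univ : Finset (Fin n)) = insert i (insert j (univ \ {i, j})) := by
      ext x
      simp only [Finset.mem_univ, Finset.mem_insert, Finset.mem_sdiff, Finset.mem_singleton,
        true_iff, true_and]
      by_cases h1 : x = i
      · tauto
      · by_cases h2 : x = j <;> tauto
    have h2 : i ∉ insert j (univ \ ({i, j} : Finset (Fin n))) := by simp [hij]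
    have h3 : j ∉ univ \ ({i, j} : Finset (Fin n)) := by simp
    rw [← Finset.prod_insert h3, ← Finset.prod_insert h2, ← heq]
  rw [hins i j hij, hins j i (Ne.symm hij), Finset.prod_insert (by simp), Finset.prod_insert (by simp)]
  rw [show ({j, i} : Finset (Fin n)) = {i, j} from Finset.pair_comm j i]
  rw [← huniv]
  ring

lemma compl_sum (n q : ℕ) (hq : q ≤ n) (F : Finset (Fin n) → ℝ) :
    ∑ t ∈ (univ : Finset (Fin n)).powersetCard (n - q), F t
      = ∑ u ∈ (univ : Finset (Fin n)).powersetCard q, F (univ \ u) := by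
  apply Finset.sum_nbij' (fun t => univ \ t) (fun u => univ \ u)
  · intro t ht
    rw [Finset.mem_powersetCard] at ht ⊢
    refine ⟨Finset.subset_univ _, ?_⟩
    rw [Finset.card_sdiff_of_subset ht.1, ht.2, Finset.card_univ, Fintype.card_fin]
    omega
  · intro u hu
    rw [Finset.mem_powersetCard] at hu ⊢
    refine ⟨Finset.subset_univ _, ?_⟩
    rw [Finset.card_sdiff_of_subset hu.1, hu.2, Finset.card_univ, Fintype.card_fin]
  · intro t ht
    simp [Finset.sdiff_sdiff_self_left, Finset.inter_eq_right.2 (Finset.mem_powersetCard.1 ht).1]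
  · intro u hu
    simp [Finset.sdiff_sdiff_self_left, Finset.inter_eq_right.2 (Finset.mem_powersetCard.1 hu).1]
  · intro t ht
    rw [Finset.sdiff_sdiff_self_left, Finset.inter_eq_right.2 (Finset.mem_powersetCard.1 ht).1]

lemma newton_base (n : ℕ) (hn : 2 ≤ n) (ν : Fin n → ℝ) :
    pq n (n-2) ν * pq n n ν ≤ pq n (n-1) ν ^ 2 := by
  set b : Fin n → ℝ := fun i => ∏ j ∈ univ.erase i, ν j with hb
  set B : ℝ := ∑ i, b i with hB
  set Q : ℝ := ∑ i, (b i)^2 with hQ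
  have hCS : B^2 ≤ n * Q := by
    have := Finset.sum_mul_sq_le_sq_mul_sq univ b (fun _ => 1)
    simp only [mul_one, one_pow] at this
    calc B^2 ≤ (∑ i, b i * 1)^2 := by simp [hB]
      _ ≤ (∑ i, b i ^2) * (∑ _i : Fin n, (1:ℝ)^2) := Finset.sum_mul_sq_le_sq_mul_sq univ b (fun _ => 1)
      _ = n * Q := by simp [hQ]; ring
  have hprod : esymm n (n-2) ν * esymm n n ν = (B^2 - Q)/2 := by
    have h1 : esymm n (n-2) ν * esymm n n ν
        = ∑ t ∈ (univ : Finset (Fin n)).powersetCard (n-2), ((∏ j ∈ t, ν j) * ∏ j, ν j) := by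
      rw [esymm, esymm_self, Finset.sum_mul]
    have h2 := compl_sum n 2 (by omega) (fun t => (∏ j ∈ t, ν j) * ∏ j, ν j)
    have h3 : ∀ u ∈ (univ : Finset (Fin n)).powersetCard 2,
        (∏ j ∈ univ \ u, ν j) * ∏ j, ν j = ∏ i ∈ u, b i := by
      intro u hu
      exact (pair_prod n ν (Finset.mem_powersetCard.1 hu).2).symm
    have h4 := esymm_two_sum (univ : Finset (Fin n)) b
    rw [h1, h2, Finset.sum_congr rfl h3]
    linarith [h4]
  have hBe : esymm n (n-1) ν = B := (esymm_pred n (by omega) ν)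
  have hch2 : n.choose (n-2) = n.choose 2 := Nat.choose_symm (by omega)
  have hch1 : n.choose (n-1) = n := by
    rw [Nat.choose_symm (by omega : 1 ≤ n), Nat.choose_one_right]
  have hn2 : (2:ℝ) ≤ (n:ℝ) := by exact_mod_cast hn
  rw [pq, pq, pq, hch2, Nat.choose_self, hBe, hch1]
  rw [Nat.cast_choose_two]
  rw [div_mul_div_comm, hprod, div_pow]
  rw [div_le_div_iff₀ (by nlinarith) (by nlinarith)]
  nlinarith [mul_le_mul_of_nonneg_left hCS (by positivity : (0:ℝ) ≤ (n:ℝ)), sq_nonneg B]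


lemma newton (k : ℕ) (hk : 1 ≤ k) (n : ℕ) (hn : k + 1 ≤ n) (ν : Fin n → ℝ) :
    pq n (k-1) ν * pq n (k+1) ν ≤ pq n k ν ^ 2 := by
  induction n, hn using Nat.le_induction with
  | base =>
    have h := newton_base (k+1) (by omega) ν
    have e1 : (k+1) - 2 = k - 1 := by omega
    have e2 : (k+1) - 1 = k := by omega
    rw [e1, e2] at h
    exact h
  | succ n hn ih =>
    obtain ⟨ξ, hξ⟩ := deriv_step n ν
    rw [pq_deriv_step n (k-1) (by omega) ν ξ (hξ _ (by omega)),
        pq_deriv_step n (k+1) (by omega) ν ξ (hξ _ (by omega)),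
        pq_deriv_step n k (by omega) ν ξ (hξ _ (by omega))]
    exact ih ξ


lemma pq_pos {n q : ℕ} (hq : q ≤ n) {ν : Fin n → ℝ} (h : 0 < esymm n q ν) : 0 < pq n q ν :=
  div_pos h (by exact_mod_cast Nat.choose_pos hq)

lemma pq_zero (n : ℕ) (ν : Fin n → ℝ) : pq n 0 ν = 1 := by
  rw [pq, esymm_zero]; simp

/-- Maclaurin chain: `p_r^(r-1) ≤ p_(r-1)^r` given positivity up to `r`. -/
lemma maclaurin (n : ℕ) (ν : Fin n → ℝ) (r : ℕ) (hr : 1 ≤ r) (hrn : r ≤ n)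
    (hpos : ∀ q, 1 ≤ q → q ≤ r → 0 < esymm n q ν) :
    pq n r ν ^ (r-1) ≤ pq n (r-1) ν ^ r := by
  induction r, hr using Nat.le_induction with
  | base => simp [pq_zero]
  | succ r hr ih =>
    have hrn' : r ≤ n := by omega
    have hpos' : ∀ q, 1 ≤ q → q ≤ r → 0 < esymm n q ν := fun q h1 h2 => hpos q h1 (by omega)
    have IH := ih hrn' hpos'
    have hN := newton r hr n (by omega) ν
    have p0 : 0 < pq n (r-1) ν := by
      rcases Nat.eq_or_lt_of_le hr with h | h
      · rw [← h]; simp [pq_zero]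
      · exact pq_pos (by omega) (hpos (r-1) (by omega) (by omega))
    have p1 : 0 < pq n r ν := pq_pos (by omega) (hpos r (by omega) (by omega))
    have p2 : 0 < pq n (r+1) ν := pq_pos (by omega) (hpos (r+1) (by omega) (by omega))
    -- want : pq (r+1) ^ r ≤ pq r ^ (r+1)
    have e1 : (r+1) - 1 = r := by omega
    rw [e1]
    -- from hN : pq (r-1) * pq (r+1) ≤ pq r ^ 2
    -- raise to r-th power
    have h2 : (pq n (r-1) ν * pq n (r+1) ν)^r ≤ (pq n r ν ^2)^r :=
      pow_le_pow_left₀ (by positivity) hN r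
    have h3 : pq n (r+1) ν ^ r * pq n (r-1) ν ^ r ≤ pq n r ν ^ (2*r) := by
      rw [← mul_pow, mul_comm (pq n (r+1) ν)]
      calc (pq n (r-1) ν * pq n (r+1) ν) ^ r ≤ (pq n r ν ^2)^r := h2
        _ = pq n r ν ^ (2*r) := by rw [← pow_mul]
    -- IH : pq r ^ (r-1) ≤ pq (r-1) ^ r
    have h4 : pq n (r+1) ν ^ r * pq n r ν ^ (r-1) ≤ pq n (r+1) ν ^ r * pq n (r-1) ν ^ r :=
      mul_le_mul_of_nonneg_left IH (by positivity)
    have h5 : pq n (r+1) ν ^ r * pq n r ν ^ (r-1) ≤ pq n r ν ^ (2*r) := le_trans h4 h3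
    have h6 : pq n r ν ^ (2*r) = pq n r ν ^ (r+1) * pq n r ν ^ (r-1) := by
      rw [← pow_add]; congr 1; omega
    rw [h6] at h5
    exact le_of_mul_le_mul_right (by rwa [mul_comm (pq n (r+1) ν ^ r)] at h5) (by positivity)

/-- decomposition along one coordinate -/
lemma esymm_update (n q : ℕ) (hq : 1 ≤ q) (μ : Fin n → ℝ) (j : Fin n) :
    esymm n q μ = esymm n q (Function.update μ j 0)
      + μ j * esymm n (q-1) (Function.update μ j 0) := by
  have key : ∀ (t : Finset (Fin n)), j ∉ t →
      ∏ i ∈ t, Function.update μ j 0 i = ∏ i ∈ t, μ i := by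
    intro t hjt
    apply Finset.prod_congr rfl
    intro i hi
    exact Function.update_of_ne (fun h => hjt (by rw [← h]; exact hi)) 0 μ
  have hzero : ∀ (t : Finset (Fin n)), j ∈ t → ∏ i ∈ t, Function.update μ j 0 i = 0 := by
    intro t hjt
    exact Finset.prod_eq_zero hjt (Function.update_self j 0 μ)
  -- split esymm n q μ
  rw [esymm, ← Finset.sum_filter_add_sum_filter_not (Finset.powersetCard q univ) (fun t => j ∈ t)]
  -- part with j ∉ t equals esymm n q (update)
  have hB : esymm n q (Function.update μ j 0)
      = ∑ t ∈ (Finset.powersetCard q univ).filter (fun t => j ∉ t), ∏ i ∈ t, μ i := by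
    rw [esymm, ← Finset.sum_filter_add_sum_filter_not (Finset.powersetCard q univ) (fun t => j ∈ t)]
    rw [Finset.sum_eq_zero (fun t ht => hzero t (Finset.mem_filter.1 ht).2), zero_add]
    exact Finset.sum_congr rfl (fun t ht => key t (Finset.mem_filter.1 ht).2)
  have hA : μ j * esymm n (q-1) (Function.update μ j 0)
      = ∑ t ∈ (Finset.powersetCard q univ).filter (fun t => j ∈ t), ∏ i ∈ t, μ i := by
    rw [esymm, ← Finset.sum_filter_add_sum_filter_not (Finset.powersetCard (q-1) univ) (fun t => j ∈ t)]
    rw [Finset.sum_eq_zero (fun t ht => hzero t (Finset.mem_filter.1 ht).2), zero_add]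
    rw [Finset.sum_congr rfl (fun t ht => key t (Finset.mem_filter.1 ht).2)]
    rw [Finset.mul_sum]
    apply Finset.sum_nbij' (fun t => insert j t) (fun t => t.erase j)
    · intro t ht
      rw [Finset.mem_filter, Finset.mem_powersetCard] at ht ⊢
      refine ⟨⟨Finset.subset_univ _, ?_⟩, Finset.mem_insert_self j t⟩
      rw [Finset.card_insert_of_notMem ht.2, ht.1.2]
      omega
    · intro t ht
      rw [Finset.mem_filter, Finset.mem_powersetCard] at ht ⊢
      refine ⟨⟨Finset.subset_univ _, ?_⟩, Finset.notMem_erase j t⟩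
      rw [Finset.card_erase_of_mem ht.2, ht.1.2]
    · intro t ht
      exact Finset.erase_insert (Finset.mem_filter.1 ht).2
    · intro t ht
      exact Finset.insert_erase (Finset.mem_filter.1 ht).2
    · intro t ht
      exact (Finset.prod_insert (Finset.mem_filter.1 ht).2).symm
  rw [← hA, ← hB]
  ring


lemma superset_count {n a q : ℕ} (hq : a ≤ q) (A : Finset (Fin n)) (hA : A.card = a) :
    ((Finset.powersetCard q (univ : Finset (Fin n))).filter (fun S => A ⊆ S)).card
      = (n - a).choose (q - a) := by
  have h1 : ((Finset.powersetCard q (univ : Finset (Fin n))).filter (fun S => A ⊆ S)).card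
      = ((univ \ A).powersetCard (q - a)).card := by
    apply Finset.card_bij' (fun S _ => S \ A) (fun u _ => u ∪ A)
    · intro S hS
      rw [Finset.mem_filter, Finset.mem_powersetCard] at hS
      rw [Finset.mem_powersetCard]
      refine ⟨Finset.sdiff_subset_sdiff hS.1.1 (le_refl A), ?_⟩
      rw [Finset.card_sdiff_of_subset hS.2, hS.1.2, hA]
    · intro u hu
      rw [Finset.mem_powersetCard] at hu
      have hdisj : Disjoint u A := by
        have := hu.1
        rw [Finset.subset_sdiff] at this
        exact this.2
      rw [Finset.mem_filter, Finset.mem_powersetCard]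
      refine ⟨⟨Finset.subset_univ _, ?_⟩, Finset.subset_union_right⟩
      rw [Finset.card_union_of_disjoint hdisj, hu.2, hA]
      omega
    · intro S hS
      rw [Finset.mem_filter] at hS
      exact Finset.sdiff_union_of_subset hS.2
    · intro u hu
      rw [Finset.mem_powersetCard] at hu
      have hdisj : Disjoint u A := by
        have := hu.1
        rw [Finset.subset_sdiff] at this
        exact this.2
      exact Finset.union_sdiff_cancel_right hdisj
  rw [h1, Finset.card_powersetCard, Finset.card_sdiff_of_subset (Finset.subset_univ A), hA,
    Finset.card_univ, Fintype.card_fin]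

lemma esymm_shift (n q : ℕ) (hq : q ≤ n) (μ : Fin n → ℝ) (t : ℝ) :
    esymm n q (fun i => μ i + t)
      = ∑ a ∈ Finset.range (q+1), ((n - a).choose (q - a) : ℝ) * t^(q-a) * esymm n a μ := by
  rw [esymm]
  have hterm : ∀ S ∈ Finset.powersetCard q (univ : Finset (Fin n)),
      ∏ i ∈ S, (μ i + t) = ∑ A ∈ S.powerset, (∏ i ∈ A, μ i) * t^(q - A.card) := by
    intro S hS
    rw [Finset.prod_add]
    apply Finset.sum_congr rfl
    intro A hA
    congr 1
    rw [Finset.prod_const]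
    congr 1
    rw [Finset.card_sdiff_of_subset (Finset.mem_powerset.1 hA), (Finset.mem_powersetCard.1 hS).2]
  rw [Finset.sum_congr rfl hterm]
  rw [Finset.sum_comm' (s := Finset.powersetCard q (univ : Finset (Fin n)))
    (t := fun S => S.powerset) (t' := (univ : Finset (Fin n)).powerset)
    (s' := fun A => (Finset.powersetCard q (univ : Finset (Fin n))).filter (fun S => A ⊆ S))
    (by
      intro S A
      rw [Finset.mem_powerset, Finset.mem_powerset, Finset.mem_filter]
      constructor
      · rintro ⟨h1, h2⟩
        exact ⟨⟨h1, h2⟩, Finset.subset_univ A⟩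
      · rintro ⟨⟨h1, h2⟩, _⟩
        exact ⟨h1, h2⟩)]
  -- now : ∑ A ∈ univ.powerset, ∑ S ∈ filter .., (∏ i ∈ A, μ i) * t ^ (q - A.card)
  have hinner : ∀ A ∈ (univ : Finset (Fin n)).powerset,
      ∑ _S ∈ (Finset.powersetCard q (univ : Finset (Fin n))).filter (fun S => A ⊆ S),
        (∏ i ∈ A, μ i) * t^(q - A.card)
      = (((Finset.powersetCard q (univ : Finset (Fin n))).filter
          (fun S => A ⊆ S)).card : ℝ) * ((∏ i ∈ A, μ i) * t^(q - A.card)) := by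
    intro A _
    rw [Finset.sum_const, nsmul_eq_mul]
  rw [Finset.sum_congr rfl hinner]
  rw [Finset.sum_powerset]
  have hcard : (univ : Finset (Fin n)).card = n := by simp
  rw [hcard]
  -- kill terms with a > q
  rw [← Finset.sum_subset (Finset.range_subset_range.2 (by omega : q + 1 ≤ n + 1))]
  · apply Finset.sum_congr rfl
    intro a ha
    have ha' : a ≤ q := by rw [Finset.mem_range] at ha; omega
    rw [esymm, Finset.mul_sum]
    apply Finset.sum_congr rfl
    intro A hA
    have hAa := (Finset.mem_powersetCard.1 hA).2
    rw [superset_count ha' A hAa, hAa]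
    ring
  · intro a ha hnotin
    have haq : q < a := by
      rw [Finset.mem_range] at ha
      rw [Finset.mem_range] at hnotin
      omega
    apply Finset.sum_eq_zero
    intro A hA
    have hAcard := (Finset.mem_powersetCard.1 hA).2
    have : ((Finset.powersetCard q (univ : Finset (Fin n))).filter (fun S => A ⊆ S)) = ∅ := by
      apply Finset.filter_eq_empty_iff.2
      intro S hS hsub
      have h1 := Finset.card_le_card hsub
      rw [hAcard, (Finset.mem_powersetCard.1 hS).2] at h1
      omega
    rw [this]
    simp

lemma shift_in_cone {n p : ℕ} (hpn : p ≤ n) {μ : Fin n → ℝ} (h : μ ∈ gardingCone n p)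
    {t : ℝ} (ht : 0 ≤ t) : (fun i => μ i + t) ∈ gardingCone n p := by
  intro q h1 hq
  rw [esymm_shift n q (le_trans hq hpn)]
  apply Finset.sum_pos'
  · intro a ha
    rcases Nat.eq_zero_or_pos a with rfl | hapos
    · rw [esymm_zero]
      positivity
    · have := h a hapos (le_trans (by rw [Finset.mem_range] at ha; omega) hq)
      positivity
  · refine ⟨q, by simp, ?_⟩
    have hq0 := h q h1 hq
    simp only [Nat.sub_self, pow_zero, Nat.choose_zero_right]
    simpa using hq0

/-- The cone restriction property: coordinate sections of the Gårding cone. -/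
lemma cone_facts {n p : ℕ} (hp2 : 1 ≤ p) (hpn : p ≤ n) {μ : Fin n → ℝ}
    (hμ : μ ∈ gardingCone n p) (j : Fin n) :
    ∀ q, 1 ≤ q → q ≤ p - 1 → 0 < esymm n q (Function.update μ j 0) := by
  set w : ℝ → Fin n → ℝ := fun t => Function.update (fun i => μ i + t) j 0 with hw
  have hw0 : Function.update μ j 0 = w 0 := by
    funext i
    rw [hw]
    simp only [Function.update_apply]
    split <;> simp
  have hwi : ∀ t (i : Fin n), w t i = if i = j then 0 else μ i + t := by
    intro t i
    rw [hw]
    simp [Function.update_apply]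
  have hcont : ∀ q, Continuous (fun t => esymm n q (w t)) := by
    intro q
    apply continuous_finset_sum
    intro S _
    apply continuous_finset_prod
    intro i _
    simp only [hwi]
    by_cases h : i = j
    · simp only [h, if_true]
      exact continuous_const
    · simp only [h, if_false]
      exact continuous_const.add continuous_id
  by_contra hcon
  push_neg at hcon
  obtain ⟨q0, hq01, hq0p, hq0le⟩ := hcon
  set S : Set ℝ := {t | 0 ≤ t ∧ ∃ q, 1 ≤ q ∧ q ≤ p - 1 ∧ esymm n q (w t) ≤ 0} with hS
  have hSne : S.Nonempty := ⟨0, le_refl 0, q0, hq01, hq0p, by rwa [← hw0]⟩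
  have hTbig : ∀ t : ℝ, 1 + ∑ i, |μ i| ≤ t → ∀ q, 1 ≤ q → q ≤ p - 1 →
      0 < esymm n q (w t) := by
    intro t htt q h1 h2
    have hpos : ∀ i : Fin n, i ≠ j → 0 < μ i + t := by
      intro i hi
      have h3 : |μ i| ≤ ∑ k, |μ k| :=
        Finset.single_le_sum (f := fun k => |μ k|) (fun k _ => abs_nonneg _) (Finset.mem_univ i)
      have h4 := neg_abs_le (μ i)
      linarith
    have hnonneg : ∀ i : Fin n, 0 ≤ w t i := by
      intro i
      rw [hwi]
      by_cases h : i = j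
      · simp [h]
      · simp only [h, if_false]
        exact (hpos i h).le
    obtain ⟨A, hA1, hA2⟩ := Finset.exists_subset_card_eq
      (show q ≤ (univ.erase j).card by
        rw [Finset.card_erase_of_mem (Finset.mem_univ j), Finset.card_univ, Fintype.card_fin]
        omega)
    rw [esymm]
    apply Finset.sum_pos'
    · intro B _
      exact Finset.prod_nonneg (fun i _ => hnonneg i)
    · refine ⟨A, Finset.mem_powersetCard.2 ⟨Finset.subset_univ _, hA2⟩, ?_⟩
      apply Finset.prod_pos
      intro i hi
      have hij : i ≠ j := (Finset.mem_erase.1 (hA1 hi)).1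
      rw [hwi]
      simp only [hij, if_false]
      exact hpos i hij
  have hSbdd : BddAbove S := by
    refine ⟨1 + ∑ i, |μ i|, ?_⟩
    intro t htS
    by_contra hgt
    push_neg at hgt
    obtain ⟨_, q, h1, h2, h3⟩ := htS
    exact absurd (hTbig t hgt.le q h1 h2) (not_lt.2 h3)
  have hSclosed : IsClosed S := by
    have : S = Set.Ici (0:ℝ) ∩ ⋃ q ∈ Finset.Icc 1 (p-1), {t | esymm n q (w t) ≤ 0} := by
      ext t
      simp only [hS, Set.mem_setOf_eq, Set.mem_inter_iff, Set.mem_Ici, Set.mem_iUnion,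
        Finset.mem_Icc, Set.mem_setOf_eq, exists_prop]
      tauto
    rw [this]
    apply IsClosed.inter isClosed_Ici
    apply (Finset.Icc 1 (p-1)).finite_toSet.isClosed_biUnion
    intro q _
    exact isClosed_le (hcont q) continuous_const
  set t0 : ℝ := sSup S with ht0
  have ht0S : t0 ∈ S := hSclosed.csSup_mem hSne hSbdd
  have ht00 : 0 ≤ t0 := ht0S.1
  have hafter : ∀ t, t0 < t → ∀ q, 1 ≤ q → q ≤ p - 1 → 0 < esymm n q (w t) := by
    intro t htt q h1 h2
    by_contra hle
    push_neg at hle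
    have : t ∈ S := ⟨le_trans ht00 htt.le, q, h1, h2, hle⟩
    exact absurd (le_csSup hSbdd this) (not_le.2 htt)
  have hge : ∀ q, 1 ≤ q → q ≤ p - 1 → 0 ≤ esymm n q (w t0) := by
    intro q h1 h2
    have htend : Filter.Tendsto (fun t => esymm n q (w t)) (nhdsWithin t0 (Set.Ioi t0))
        (nhds (esymm n q (w t0))) :=
      ((hcont q).tendsto t0).mono_left nhdsWithin_le_nhds
    apply ge_of_tendsto htend
    filter_upwards [self_mem_nhdsWithin] with t ht
    exact (hafter t ht q h1 h2).le
  have hEx : ∃ q, 1 ≤ q ∧ q ≤ p - 1 ∧ esymm n q (w t0) ≤ 0 := ht0S.2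
  classical
  set k : ℕ := Nat.find hEx with hk
  obtain ⟨hk1, hkp, hkle⟩ := Nat.find_spec hEx
  rw [← hk] at hk1 hkp hkle
  have hkeq : esymm n k (w t0) = 0 := le_antisymm hkle (hge k hk1 hkp)
  have hbelow : ∀ i, 1 ≤ i → i < k → 0 < esymm n i (w t0) := by
    intro i h1 h2
    have := Nat.find_min hEx h2
    push_neg at this
    exact this h1 (by omega)
  -- Newton gives a contradiction
  have hkn : k + 1 ≤ n := by omega
  have hNewton := newton k hk1 n hkn (w t0)
  have hpq0 : pq n k (w t0) = 0 := by
    rw [pq, hkeq, zero_div]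
  have hpqm : 0 < pq n (k-1) (w t0) := by
    rcases Nat.eq_or_lt_of_le hk1 with h | h
    · have hke : k - 1 = 0 := by omega
      rw [hke, pq_zero]
      norm_num
    · exact pq_pos (by omega) (hbelow (k-1) (by omega) (by omega))
  have hpqp : 0 < pq n (k+1) (w t0) := by
    apply pq_pos (by omega)
    have hcone := shift_in_cone hpn hμ ht00
    have hup := esymm_update n (k+1) (by omega) (fun i => μ i + t0) j
    have hwt : Function.update (fun i => μ i + t0) j 0 = w t0 := rfl
    rw [hwt] at hup
    have hpos := hcone (k+1) (by omega) (by omega)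
    rw [hup] at hpos
    simpa [Nat.add_sub_cancel, hkeq] using hpos
  nlinarith [hNewton, hpqm, hpqp, hpq0]

lemma esymm_one (n : ℕ) (μ : Fin n → ℝ) : esymm n 1 μ = ∑ i, μ i := by
  rw [esymm, Finset.powersetCard_one, Finset.sum_map]
  simp

lemma sum_esymm_update (n q : ℕ) (hq : q ≤ n) (μ : Fin n → ℝ) :
    ∑ j, esymm n q (Function.update μ j 0) = ((n - q : ℕ) : ℝ) * esymm n q μ := by
  have h1 : ∀ j : Fin n, esymm n q (Function.update μ j 0)
      = ∑ t ∈ Finset.powersetCard q (univ : Finset (Fin n)),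
          (if j ∈ t then 0 else ∏ i ∈ t, μ i) := by
    intro j
    rw [esymm]
    apply Finset.sum_congr rfl
    intro t _
    by_cases hj : j ∈ t
    · rw [if_pos hj]
      exact Finset.prod_eq_zero hj (Function.update_self j 0 μ)
    · rw [if_neg hj]
      exact Finset.prod_congr rfl fun i hi =>
        Function.update_of_ne (fun h => hj (by rw [← h]; exact hi)) 0 μ
  simp_rw [h1]
  rw [Finset.sum_comm]
  rw [esymm, Finset.mul_sum]
  apply Finset.sum_congr rfl
  intro t ht
  rw [Finset.sum_ite, Finset.sum_const, Finset.sum_const, smul_zero, zero_add, nsmul_eq_mul]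
  have hcompl : univ.filter (fun x => ¬ x ∈ t) = tᶜ := by
    ext x
    simp [Finset.mem_compl]
  rw [hcompl, Finset.card_compl, (Finset.mem_powersetCard.1 ht).2, Fintype.card_fin]

lemma two_pow_bound (r : ℕ) {x y : ℝ} (hx : 0 ≤ x) (hy : 0 ≤ y) :
    (x + y)^r ≤ 2^r * (x^r + y^r) := by
  have h1 : x + y ≤ 2 * max x y := by
    rcases le_total x y with h | h
    · rw [max_eq_right h]; linarith
    · rw [max_eq_left h]; linarith
  calc (x+y)^r ≤ (2 * max x y)^r := pow_le_pow_left₀ (by positivity) h1 r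
    _ = 2^r * (max x y)^r := mul_pow 2 _ r
    _ ≤ 2^r * (x^r + y^r) := by
        apply mul_le_mul_of_nonneg_left _ (by positivity)
        rcases le_total x y with h | h
        · rw [max_eq_right h]; nlinarith [pow_nonneg hx r]
        · rw [max_eq_left h]; nlinarith [pow_nonneg hy r]

set_option maxHeartbeats 1600000 in
/-- The core inequality: `σ_p^(p-1) ≤ C ⬝ σ_(p-1)(μ|n) ⬝ σ_(p-1)^(p-1)`. -/
lemma core (n p : ℕ) (hp : 2 ≤ p) (hpn : p ≤ n) :
    ∃ C : ℝ, 0 < C ∧ ∀ μ ∈ gardingCone n p, Monotone μ →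
      esymm n p μ ^ (p-1) ≤ C * esymm n (p-1) (Function.update μ (⟨n-1, Nat.sub_lt (by omega) Nat.one_pos⟩ : Fin n) 0)
        * esymm n (p-1) μ ^ (p-1) := by
  have hCp : (0:ℝ) < (n.choose p : ℝ) := by exact_mod_cast Nat.choose_pos hpn
  have hCp1 : (0:ℝ) < (n.choose (p-1) : ℝ) := by
    exact_mod_cast Nat.choose_pos (by omega : p - 1 ≤ n)
  have hCp2 : (0:ℝ) < (n.choose (p-2) : ℝ) := by
    exact_mod_cast Nat.choose_pos (by omega : p - 2 ≤ n)
  set Ca : ℝ := (n.choose p : ℝ)^(p-1) / (n.choose (p-1) : ℝ)^p with hCa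
  set Cb : ℝ := (n.choose (p-1) : ℝ)^(p-2) / (n.choose (p-2) : ℝ)^(p-1) with hCb
  have hCapos : 0 < Ca := by positivity
  have hCbpos : 0 < Cb := by positivity
  refine ⟨2^(p-1) * (Ca + Cb + 1), by positivity, ?_⟩
  intro μ hμ hmono
  set j : Fin n := ⟨n-1, by omega⟩ with hj
  set ms : Fin n → ℝ := Function.update μ j 0 with hms
  set K : ℝ := esymm n (p-1) ms with hK
  set T : ℝ := esymm n (p-2) ms with hT
  set S : ℝ := esymm n (p-1) μ with hS
  set P : ℝ := esymm n p μ with hP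
  set Q : ℝ := esymm n p ms with hQ
  have hCF := cone_facts (by omega : 1 ≤ p) hpn hμ j
  have hKpos : 0 < K := hCF (p-1) (by omega) (le_refl _)
  have hTpos : 0 < T := by
    rcases Nat.eq_or_lt_of_le hp with h | h
    · rw [hT, show p - 2 = 0 by omega, esymm_zero]
      norm_num
    · exact hCF (p-2) (by omega) (by omega)
  have hSpos : 0 < S := hμ (p-1) (by omega) (by omega)
  have hPpos : 0 < P := hμ p (by omega) (le_refl _)
  -- m = μ j > 0
  have hm : 0 < μ j := by
    have h1 : 0 < esymm n 1 μ := hμ 1 (le_refl _) (by omega)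
    rw [esymm_one] at h1
    have h2 : ∑ i, μ i ≤ ∑ _i : Fin n, μ j := by
      apply Finset.sum_le_sum
      intro i _
      apply hmono
      rw [Fin.le_def]
      simp [hj]
      omega
    rw [Finset.sum_const, Finset.card_univ, Fintype.card_fin, nsmul_eq_mul] at h2
    by_contra hneg
    push_neg at hneg
    nlinarith [h1.trans_le h2]
  have hupP : P = Q + μ j * K := by
    rw [hP, hQ, hK]
    exact esymm_update n p (by omega) μ j
  have hupS : S = K + μ j * T := by
    have h := esymm_update n (p-1) (by omega) μ j
    rw [show p - 1 - 1 = p - 2 by omega] at h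
    rw [hS, hK, hT]
    exact h
  have hKS : K ≤ S := by nlinarith
  have hmTS : μ j * T ≤ S := by nlinarith
  -- key 2 : K^(p-2) ≤ Cb * T^(p-1)
  have key2 : K^(p-2) ≤ Cb * T^(p-1) := by
    have hmac := maclaurin n ms (p-1) (by omega) (by omega)
      (fun q h1 h2 => hCF q h1 (by omega))
    rw [pq, pq, show p - 1 - 1 = p - 2 by omega, div_pow, div_pow] at hmac
    rw [div_le_div_iff₀ (by positivity) (by positivity)] at hmac
    rw [hCb, div_mul_eq_mul_div, le_div_iff₀ (by positivity)]
    calc K^(p-2) * (n.choose (p-2):ℝ)^(p-1) ≤ T^(p-1) * (n.choose (p-1):ℝ)^(p-2) := hmac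
      _ = (n.choose (p-1):ℝ)^(p-2) * T^(p-1) := by ring
  have hKp : K^(p-1) = K^(p-2) * K := by
    rw [← pow_succ]
    congr 1
    omega
  -- main estimate
  have main : P^(p-1) ≤ 2^(p-1) * (Ca + Cb + 1) * K * S^(p-1) := by
    have hmK : (0:ℝ) ≤ μ j * K := by positivity
    have hmKb : (μ j * K)^(p-1) ≤ Cb * K * S^(p-1) := by
      calc (μ j * K)^(p-1) = μ j^(p-1) * (K^(p-2) * K) := by rw [mul_pow, hKp]
        _ ≤ μ j^(p-1) * ((Cb * T^(p-1)) * K) := by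
            apply mul_le_mul_of_nonneg_left _ (by positivity)
            exact mul_le_mul_of_nonneg_right key2 hKpos.le
        _ = Cb * K * (μ j * T)^(p-1) := by rw [mul_pow]; ring
        _ ≤ Cb * K * S^(p-1) := by
            apply mul_le_mul_of_nonneg_left _ (by positivity)
            exact pow_le_pow_left₀ (by positivity) hmTS _
    rcases le_or_gt Q 0 with hQle | hQpos
    · have h1 : P ≤ μ j * K := by linarith
      have h2 : P^(p-1) ≤ (μ j * K)^(p-1) := pow_le_pow_left₀ hPpos.le h1 _
      have h4 : (1:ℝ) ≤ 2^(p-1) := one_le_pow₀ (by norm_num)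
      have hfac : Cb ≤ 2^(p-1) * (Ca + Cb + 1) := by nlinarith
      calc P^(p-1) ≤ Cb * K * S^(p-1) := h2.trans hmKb
        _ = Cb * (K * S^(p-1)) := by ring
        _ ≤ (2^(p-1) * (Ca + Cb + 1)) * (K * S^(p-1)) :=
            mul_le_mul_of_nonneg_right hfac (by positivity)
        _ = 2^(p-1) * (Ca + Cb + 1) * K * S^(p-1) := by ring
    · -- Q > 0 : Maclaurin at level p for ms
      have hposms : ∀ q, 1 ≤ q → q ≤ p → 0 < esymm n q ms := by
        intro q h1 h2
        rcases Nat.eq_or_lt_of_le h2 with h | h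
        · rw [h]; exact hQpos
        · exact hCF q h1 (by omega)
      have hmac := maclaurin n ms p (by omega) hpn hposms
      rw [pq, pq, div_pow, div_pow, div_le_div_iff₀ (by positivity) (by positivity)] at hmac
      have key1 : Q^(p-1) ≤ Ca * K^p := by
        rw [hCa, div_mul_eq_mul_div, le_div_iff₀ (by positivity)]
        calc Q^(p-1) * (n.choose (p-1):ℝ)^p ≤ K^p * (n.choose p:ℝ)^(p-1) := hmac
          _ = (n.choose p:ℝ)^(p-1) * K^p := by ring
      have hKSp : K^p ≤ K * S^(p-1) := by
        have : K^p = K * K^(p-1) := by rw [← pow_succ']; congr 1; omega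
        rw [this]
        exact mul_le_mul_of_nonneg_left (pow_le_pow_left₀ hKpos.le hKS _) hKpos.le
      have h2 := two_pow_bound (p-1) hmK hQpos.le
      calc P^(p-1) = (μ j * K + Q)^(p-1) := by rw [hupP, add_comm]
        _ ≤ 2^(p-1) * ((μ j * K)^(p-1) + Q^(p-1)) := h2
        _ ≤ 2^(p-1) * (Cb * K * S^(p-1) + Ca * K^p) := by
            apply mul_le_mul_of_nonneg_left _ (by positivity)
            exact add_le_add hmKb key1
        _ ≤ 2^(p-1) * (Cb * K * S^(p-1) + Ca * (K * S^(p-1))) := by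
            apply mul_le_mul_of_nonneg_left _ (by positivity)
            apply add_le_add_right
            exact mul_le_mul_of_nonneg_left hKSp hCapos.le
        _ = 2^(p-1) * (Ca + Cb) * (K * S^(p-1)) := by ring
        _ ≤ 2^(p-1) * (Ca + Cb + 1) * (K * S^(p-1)) := by
            apply mul_le_mul_of_nonneg_right _ (by positivity)
            have h4 : (0:ℝ) < 2^(p-1) := by positivity
            nlinarith
        _ = 2^(p-1) * (Ca + Cb + 1) * K * S^(p-1) := by ring
  exact main

end Stmt19

open Stmt19 in
theorem stmt_19 (n p : ℕ) (hp : 2 ≤ p) (hpn : p ≤ n) :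
    ∃ C : ℝ, 0 < C ∧ ∃ c : ℝ, 0 < c ∧
      ∀ μ : Fin n → ℝ, μ ∈ gardingCone n p → Monotone μ →
        (1 / (C * (esymm n p μ ^ ((1 : ℝ) / p - 1) * esymm n (p - 1) μ) ^ (p - 1))
            ≤ esymm n p μ ^ ((1 : ℝ) / p - 1) *
                esymm n (p - 1) (Function.update μ (⟨n - 1, by omega⟩ : Fin n) 0)) ∧
        (c / (∑ j, linF n p μ j) ^ (p - 1) ≤ linF n p μ ⟨n - 1, by omega⟩) := by
  obtain ⟨C, hC, hcore⟩ := core n p hp hpn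
  have hd0 : 0 < n - (p-1) := by omega
  set d : ℝ := ((n - (p-1) : ℕ) : ℝ) with hd
  have hdpos : (0:ℝ) < d := by rw [hd]; exact_mod_cast hd0
  have hppos : (0:ℝ) < (p:ℝ) := by positivity
  refine ⟨C, hC, ((1/(p:ℝ))^p * d^(p-1)) / C, by positivity, ?_⟩
  intro μ hμ hmono
  set j : Fin n := ⟨n-1, by omega⟩ with hj
  set P : ℝ := esymm n p μ with hP
  set S : ℝ := esymm n (p-1) μ with hS
  set K : ℝ := esymm n (p-1) (Function.update μ j 0) with hK
  have hPpos : 0 < P := hμ p (by omega) (le_refl _)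
  have hSpos : 0 < S := hμ (p-1) (by omega) (by omega)
  have hKpos : 0 < K := cone_facts (by omega) hpn hμ j (p-1) (by omega) (le_refl _)
  set A : ℝ := P ^ ((1:ℝ)/p - 1) with hA
  have hApos : 0 < A := Real.rpow_pos_of_pos hPpos _
  have hcast : ((p-1:ℕ):ℝ) = (p:ℝ) - 1 := by
    push_cast [Nat.cast_sub (by omega : 1 ≤ p)]
    ring
  have e1 : A ^ (p-1) = P ^ (((1:ℝ)/p - 1) * ((p-1:ℕ):ℝ)) := by
    rw [hA, ← Real.rpow_natCast (P ^ ((1:ℝ)/p - 1)) (p-1), ← Real.rpow_mul hPpos.le]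
  have hone : A ^ (p-1) * A * P ^ (p-1) = 1 := by
    rw [e1, hA, ← Real.rpow_add hPpos, ← Real.rpow_natCast P (p-1), ← Real.rpow_add hPpos,
      hcast]
    rw [show ((1:ℝ)/p - 1) * ((p:ℝ) - 1) + ((1:ℝ)/p - 1) + ((p:ℝ) - 1) = 0 by
      field_simp; ring]
    exact Real.rpow_zero P
  have hKS := hcore μ hμ hmono
  -- rewrite core in terms of local abbreviations
  rw [← hP, ← hS, ← hK] at hKS
  constructor
  · rw [div_le_iff₀ (by positivity)]
    calc (1:ℝ) = A ^ (p-1) * A * P ^ (p-1) := hone.symm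
      _ ≤ A ^ (p-1) * A * (C * K * S^(p-1)) := by
          apply mul_le_mul_of_nonneg_left hKS (by positivity)
      _ = A * K * (C * (A * S) ^ (p-1)) := by rw [mul_pow]; ring
  · have hFsum : (∑ i, linF n p μ i) = (1/(p:ℝ)) * A * (d * S) := by
      simp only [linF, mul_assoc, ← Finset.mul_sum]
      rw [← hP, ← hA, sum_esymm_update n (p-1) (by omega) μ, ← hd, ← hS]
    have hlinj : linF n p μ j = (1/(p:ℝ)) * A * K := rfl
    have hinv : A^(p-1) * A = (P^(p-1))⁻¹ := eq_inv_of_mul_eq_one_left hone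
    have hge : 1/C ≤ K * S^(p-1) * (P^(p-1))⁻¹ := by
      rw [← div_eq_mul_inv, div_le_div_iff₀ hC (pow_pos hPpos _)]
      nlinarith [hKS]
    have hsplit : (1/(p:ℝ))^p = (1/(p:ℝ)) * (1/(p:ℝ))^(p-1) := by
      have hpe : p - 1 + 1 = p := by omega
      calc (1/(p:ℝ))^p = (1/(p:ℝ))^(p-1+1) := by rw [hpe]
        _ = (1/(p:ℝ)) * (1/(p:ℝ))^(p-1) := pow_succ' _ _
    rw [hFsum, hlinj, div_le_iff₀ (by positivity)]
    calc (1/(p:ℝ))^p * d^(p-1) / C = (1/(p:ℝ))^p * d^(p-1) * (1/C) := by ring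
      _ ≤ (1/(p:ℝ))^p * d^(p-1) * (K * S^(p-1) * (P^(p-1))⁻¹) := by
          apply mul_le_mul_of_nonneg_left hge (by positivity)
      _ = 1/(p:ℝ) * A * K * (1/(p:ℝ) * A * (d * S)) ^ (p-1) := by
          rw [← hinv, hsplit, mul_pow, mul_pow, mul_pow]
          ring
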